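/- Assume 1 ≤ p_H ≤ p_B ≤ p_A ≤ ∞. Then the transit distance coincides with the single-gate mixed-norm distance, i.e. d_t(x,y) = d(x,y) for all x, y ∈ ℝ^d; consequently Problem (PT) reduces to Problem (P): the objective functions Σ_{a∈A} ω_a d_t(x,a) + Σ_{b∈B} ω_b d_t(x,b) and Σ_{a∈A} ω_a d(x,a) + Σ_{b∈B} ω_b d(x,b) are equal as functions of x ∈ ℝ^d. -/

import Mathlib

open scoped ENNReal BigOperators

/-- The `ℓ_p` norm on `ℝ^d` for `p : ℝ≥0∞` (intended for `1 ≤ p ≤ ∞`). -/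
noncomputable def lpNorm {d : ℕ} (p : ℝ≥0∞) (x : Fin d → ℝ) : ℝ :=
  if p = ∞ then ⨆ k, |x k| else (∑ k, |x k| ^ p.toReal) ^ (1 / p.toReal)

/-- The mixed-norm shortest-path distance (single gate point). -/
noncomputable def mixDist {d : ℕ} (pA pB : ℝ≥0∞) (α : Fin d → ℝ) (β : ℝ)
    (x y : Fin d → ℝ) : ℝ :=
  if ∑ i, α i * x i ≤ β then
    (if ∑ i, α i * y i ≤ β then lpNorm pA (x - y)
     else ⨅ z : {z : Fin d → ℝ // ∑ i, α i * z i = β},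
            lpNorm pA (z.1 - x) + lpNorm pB (z.1 - y))
  else
    (if ∑ i, α i * y i ≤ β then
       ⨅ z : {z : Fin d → ℝ // ∑ i, α i * z i = β},
         lpNorm pA (z.1 - y) + lpNorm pB (z.1 - x)
     else lpNorm pB (x - y))

/-- The transit distance (two gate points, traveling along the hyperplane with
norm `ℓ_{p_H}` allowed). -/
noncomputable def transDist {d : ℕ} (pA pB pH : ℝ≥0∞) (α : Fin d → ℝ) (β : ℝ)
    (x y : Fin d → ℝ) : ℝ :=
  if ∑ i, α i * x i ≤ β then
    (if ∑ i, α i * y i ≤ β then lpNorm pA (x - y)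
     else ⨅ zw : {zw : (Fin d → ℝ) × (Fin d → ℝ) //
            (∑ i, α i * zw.1 i = β) ∧ (∑ i, α i * zw.2 i = β)},
        lpNorm pA (zw.1.1 - x) + lpNorm pH (zw.1.1 - zw.1.2) + lpNorm pB (zw.1.2 - y))
  else
    (if ∑ i, α i * y i ≤ β then
       ⨅ zw : {zw : (Fin d → ℝ) × (Fin d → ℝ) //
            (∑ i, α i * zw.1 i = β) ∧ (∑ i, α i * zw.2 i = β)},
         lpNorm pA (zw.1.1 - y) + lpNorm pH (zw.1.1 - zw.1.2) + lpNorm pB (zw.1.2 - x)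
     else lpNorm pB (x - y))

lemma lpNorm_eq_norm {d : ℕ} (p : ℝ≥0∞) [Fact (1 ≤ p)] (x : Fin d → ℝ) :
    lpNorm p x = ‖(WithLp.equiv p (Fin d → ℝ)).symm x‖ := by
  by_cases hp : p = ∞
  · subst hp
    simp [lpNorm, PiLp.norm_eq_ciSup, Real.norm_eq_abs, WithLp.equiv_symm_apply, PiLp.toLp_apply]
  · have h1 : (1:ℝ≥0∞) ≤ p := Fact.out
    have ht : 0 < p.toReal := ENNReal.toReal_pos (zero_lt_one.trans_le h1).ne' hp
    rw [lpNorm, if_neg hp, PiLp.norm_eq_sum ht]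
    simp [Real.norm_eq_abs, WithLp.equiv_symm_apply, PiLp.toLp_apply]

lemma lpNorm_nonneg {d : ℕ} {p : ℝ≥0∞} (hp : 1 ≤ p) (x : Fin d → ℝ) :
    0 ≤ lpNorm p x := by
  haveI := Fact.mk hp
  rw [lpNorm_eq_norm]; exact norm_nonneg _

lemma lpNorm_zero {d : ℕ} {p : ℝ≥0∞} (hp : 1 ≤ p) :
    lpNorm p (0 : Fin d → ℝ) = 0 := by
  haveI := Fact.mk hp
  rw [lpNorm_eq_norm]
  simp

lemma lpNorm_add_le {d : ℕ} {p : ℝ≥0∞} (hp : 1 ≤ p) (x y : Fin d → ℝ) :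
    lpNorm p (x + y) ≤ lpNorm p x + lpNorm p y := by
  haveI := Fact.mk hp
  rw [lpNorm_eq_norm, lpNorm_eq_norm, lpNorm_eq_norm]
  exact norm_add_le _ _

lemma lpNorm_antitone {d : ℕ} {p q : ℝ≥0∞} (hq : 1 ≤ q) (hqp : q ≤ p)
    (x : Fin d → ℝ) : lpNorm p x ≤ lpNorm q x := by
  rcases eq_or_ne q ∞ with hqi | hqi
  · have hpi : p = ∞ := top_le_iff.mp (hqi ▸ hqp)
    simp [lpNorm, hpi, hqi]
  have hs : 0 < q.toReal := ENNReal.toReal_pos (zero_lt_one.trans_le hq).ne' hqi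
  set s := q.toReal with hsdef
  set a : Fin d → ℝ := fun k => |x k| with hadef
  have ha : ∀ k, 0 ≤ a k := fun k => abs_nonneg _
  set S : ℝ := ∑ j, a j ^ s with hSdef
  have hS0 : 0 ≤ S := Finset.sum_nonneg fun j _ => Real.rpow_nonneg (ha j) s
  have key : ∀ k, a k ≤ S ^ (1/s) := by
    intro k
    have hk : a k ^ s ≤ S :=
      Finset.single_le_sum (fun j _ => Real.rpow_nonneg (ha j) s) (Finset.mem_univ k)
    calc a k = (a k ^ s) ^ (1/s) := by
          rw [← Real.rpow_mul (ha k), mul_one_div, div_self hs.ne', Real.rpow_one]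
      _ ≤ S ^ (1/s) := Real.rpow_le_rpow (Real.rpow_nonneg (ha k) s) hk (by positivity)
  have hqx : lpNorm q x = S ^ (1/s) := by rw [lpNorm, if_neg hqi]
  rcases eq_or_ne p ∞ with hpi | hpi
  · rw [hqx, lpNorm, if_pos hpi]
    exact Real.iSup_le (fun k => key k) (Real.rpow_nonneg hS0 _)
  · have ht : 0 < p.toReal := ENNReal.toReal_pos (zero_lt_one.trans_le (hq.trans hqp)).ne' hpi
    set t := p.toReal with htdef
    have hst : s ≤ t := (ENNReal.toReal_le_toReal hqi hpi).mpr hqp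
    rw [hqx, lpNorm, if_neg hpi]
    rcases eq_or_lt_of_le hS0 with hSz | hSpos
    · have hz : ∀ k, a k = 0 := by
        intro k
        have := (Finset.sum_eq_zero_iff_of_nonneg
          (fun j _ => Real.rpow_nonneg (ha j) s)).mp hSz.symm k (Finset.mem_univ k)
        have := Real.rpow_eq_zero_iff_of_nonneg (ha k) |>.mp this
        exact this.1
      have : ∀ k, |x k| ^ t = 0 := by
        intro k; rw [show |x k| = a k from rfl, hz k, Real.zero_rpow ht.ne']
      rw [Finset.sum_congr rfl fun k _ => this k, Finset.sum_const, smul_zero,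
        Real.zero_rpow (by positivity), ← hSz, Real.zero_rpow (by positivity)]
    · -- S > 0
      have hsum : (∑ k, a k ^ t) ≤ S ^ (t/s) := by
        have hterm : ∀ k, a k ^ t ≤ a k ^ s * S ^ ((t - s)/s) := by
          intro k
          rcases eq_or_lt_of_le (ha k) with hz | hpos
          · rw [← hz, Real.zero_rpow ht.ne', Real.zero_rpow hs.ne', zero_mul]
          · have h1 : a k ^ t = a k ^ s * a k ^ (t - s) := by
              rw [← Real.rpow_add hpos]; ring_nf
            have h2 : a k ^ (t - s) ≤ S ^ ((t - s)/s) := by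
              have h := Real.rpow_le_rpow (ha k) (key k) (sub_nonneg.mpr hst)
              rwa [← Real.rpow_mul hS0, one_div_mul_eq_div] at h
            rw [h1]
            exact mul_le_mul_of_nonneg_left h2 (Real.rpow_nonneg (ha k) s)
        calc (∑ k, a k ^ t) ≤ ∑ k, a k ^ s * S ^ ((t - s)/s) :=
              Finset.sum_le_sum fun k _ => hterm k
          _ = S * S ^ ((t - s)/s) := by rw [← Finset.sum_mul]
          _ = S ^ (1 + (t - s)/s) := by
              rw [Real.rpow_add hSpos, Real.rpow_one]
          _ = S ^ (t/s) := by
              congr 1; field_simp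
              ring
      calc (∑ k, |x k| ^ t) ^ (1/t) ≤ (S ^ (t/s)) ^ (1/t) :=
            Real.rpow_le_rpow (Finset.sum_nonneg fun k _ => Real.rpow_nonneg (ha k) t)
              hsum (by positivity)
        _ = S ^ (1/s) := by
            rw [← Real.rpow_mul hS0]
            congr 1
            field_simp

lemma exists_gate {d : ℕ} (α : Fin d → ℝ) (hα : α ≠ 0) (β : ℝ) :
    ∃ z : Fin d → ℝ, ∑ i, α i * z i = β := by
  obtain ⟨i, hi⟩ := Function.ne_iff.mp hα
  have hi' : α i ≠ 0 := by simpa using hi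
  refine ⟨fun j => if j = i then β / α i else 0, ?_⟩
  rw [Finset.sum_eq_single i]
  · simp only [if_pos rfl, ↓reduceIte]
    field_simp
  · intro j _ hj; simp [hj]
  · intro h; exact absurd (Finset.mem_univ i) h

lemma inf_transit_eq {d : ℕ} (pA pB pH : ℝ≥0∞)
    (hpH : 1 ≤ pH) (hHB : pH ≤ pB) (hBA : pB ≤ pA)
    (α : Fin d → ℝ) (hα : α ≠ 0) (β : ℝ) (u v : Fin d → ℝ) :
    (⨅ zw : {zw : (Fin d → ℝ) × (Fin d → ℝ) //
        (∑ i, α i * zw.1 i = β) ∧ (∑ i, α i * zw.2 i = β)},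
      lpNorm pA (zw.1.1 - u) + lpNorm pH (zw.1.1 - zw.1.2) + lpNorm pB (zw.1.2 - v)) =
    ⨅ z : {z : Fin d → ℝ // ∑ i, α i * z i = β},
      lpNorm pA (z.1 - u) + lpNorm pB (z.1 - v) := by
  have hpB : 1 ≤ pB := hpH.trans hHB
  have hpA : 1 ≤ pA := hpB.trans hBA
  obtain ⟨z0, hz0⟩ := exists_gate α hα β
  haveI h1 : Nonempty {z : Fin d → ℝ // ∑ i, α i * z i = β} := ⟨⟨z0, hz0⟩⟩
  haveI h2 : Nonempty {zw : (Fin d → ℝ) × (Fin d → ℝ) //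
      (∑ i, α i * zw.1 i = β) ∧ (∑ i, α i * zw.2 i = β)} := ⟨⟨(z0, z0), hz0, hz0⟩⟩
  have bdd1 : BddBelow (Set.range fun zw : {zw : (Fin d → ℝ) × (Fin d → ℝ) //
      (∑ i, α i * zw.1 i = β) ∧ (∑ i, α i * zw.2 i = β)} =>
      lpNorm pA (zw.1.1 - u) + lpNorm pH (zw.1.1 - zw.1.2) + lpNorm pB (zw.1.2 - v)) := by
    refine ⟨0, ?_⟩
    rintro _ ⟨zw, rfl⟩
    have n1 := lpNorm_nonneg hpA (zw.1.1 - u)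
    have n2 := lpNorm_nonneg hpH (zw.1.1 - zw.1.2)
    have n3 := lpNorm_nonneg hpB (zw.1.2 - v)
    dsimp only
    linarith
  have bdd2 : BddBelow (Set.range fun z : {z : Fin d → ℝ // ∑ i, α i * z i = β} =>
      lpNorm pA (z.1 - u) + lpNorm pB (z.1 - v)) := by
    refine ⟨0, ?_⟩
    rintro _ ⟨z, rfl⟩
    have n1 := lpNorm_nonneg hpA (z.1 - u)
    have n3 := lpNorm_nonneg hpB (z.1 - v)
    dsimp only
    linarith
  apply le_antisymm
  · refine le_ciInf fun z => ?_
    have h := ciInf_le bdd1 (⟨(z.1, z.1), z.2, z.2⟩ : {zw : (Fin d → ℝ) × (Fin d → ℝ) //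
      (∑ i, α i * zw.1 i = β) ∧ (∑ i, α i * zw.2 i = β)})
    refine h.trans (le_of_eq ?_)
    simp only [sub_self, lpNorm_zero hpH, add_zero]
  · refine le_ciInf fun zw => ?_
    obtain ⟨⟨z, w⟩, hz, hw⟩ := zw
    have h := ciInf_le bdd2 (⟨z, hz⟩ : {z : Fin d → ℝ // ∑ i, α i * z i = β})
    refine h.trans ?_
    simp only
    have tri : lpNorm pB (z - v) ≤ lpNorm pB (z - w) + lpNorm pB (w - v) := by
      have h := lpNorm_add_le hpB (z - w) (w - v)
      rwa [sub_add_sub_cancel] at h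
    have mono := lpNorm_antitone hpH hHB (z - w)
    linarith

/-- Proposition: if `p_H ≤ p_B ≤ p_A`, the transit distance coincides with the
single-gate mixed-norm distance, and hence problem (PT) reduces to problem (P). -/
theorem stmt_15 {d : ℕ} (pA pB pH : ℝ≥0∞)
    (hpH : 1 ≤ pH) (hHB : pH ≤ pB) (hBA : pB ≤ pA)
    (α : Fin d → ℝ) (hα : α ≠ 0) (β : ℝ)
    (A B : Finset (Fin d → ℝ))
    (hAH : ∀ a ∈ A, ∑ i, α i * a i ≤ β) (hBH : ∀ b ∈ B, β < ∑ i, α i * b i)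
    (ω : (Fin d → ℝ) → ℝ) (hωA : ∀ a ∈ A, 0 < ω a) (hωB : ∀ b ∈ B, 0 < ω b) :
    (∀ x y : Fin d → ℝ, transDist pA pB pH α β x y = mixDist pA pB α β x y) ∧
    (∀ x : Fin d → ℝ,
      (∑ a ∈ A, ω a * transDist pA pB pH α β x a) +
          ∑ b ∈ B, ω b * transDist pA pB pH α β x b =
        (∑ a ∈ A, ω a * mixDist pA pB α β x a) +
          ∑ b ∈ B, ω b * mixDist pA pB α β x b) := by

  have key : ∀ x y : Fin d → ℝ, transDist pA pB pH α β x y = mixDist pA pB α β x y := by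
    intro x y
    unfold transDist mixDist
    by_cases h1 : ∑ i, α i * x i ≤ β <;> by_cases h2 : ∑ i, α i * y i ≤ β <;>
      simp only [h1, h2, if_true, if_false, if_pos, if_neg, not_false_iff]
    · exact inf_transit_eq pA pB pH hpH hHB hBA α hα β x y
    · exact inf_transit_eq pA pB pH hpH hHB hBA α hα β y x
  exact ⟨key, fun x => by simp only [key]⟩
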